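/- Generalization to clusters (area version): let C₁, …, C_n be nonempty finite subsets of ℝ². Among all selections choosing one point pᵢ ∈ conv(Cᵢ) for each i, there is a selection maximizing the area of conv({p₁,…,p_n}) in which every chosen point pᵢ is an extreme point of conv(Cᵢ). -/

import Mathlib

open MeasureTheory

open Set



lemma oneDim_vol_le {sx sa sb : Set ℝ} {la lb : ℝ}
    (hla : 0 ≤ la) (hlb : 0 ≤ lb)
    (hca : Convex ℝ sa) (hcb : Convex ℝ sb)
    (haA : BddAbove sa) (haB : BddBelow sa) (hbA : BddAbove sb) (hbB : BddBelow sb)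
    (H : ∀ y ∈ sx, ∃ y₁ ∈ sa, ∃ y₂ ∈ sb, y = la * y₁ + lb * y₂) :
    volume sx ≤ ENNReal.ofReal la * volume sa + ENNReal.ofReal lb * volume sb := by
  rcases sx.eq_empty_or_nonempty with rfl | ⟨y₀, hy₀⟩
  · simp
  obtain ⟨y₁0, h10, y₂0, h20, -⟩ := H y₀ hy₀
  set Aa := sInf sa with hAa; set Ba := sSup sa with hBa
  set Ab := sInf sb with hAb; set Bb := sSup sb with hBb
  have hAaBa : Aa ≤ Ba := le_trans (csInf_le haB h10) (le_csSup haA h10)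
  have hAbBb : Ab ≤ Bb := le_trans (csInf_le hbB h20) (le_csSup hbA h20)
  have hsub : sx ⊆ Icc (la * Aa + lb * Ab) (la * Ba + lb * Bb) := by
    intro y hy
    obtain ⟨y₁, h1, y₂, h2, rfl⟩ := H y hy
    constructor
    · exact add_le_add (mul_le_mul_of_nonneg_left (csInf_le haB h1) hla)
        (mul_le_mul_of_nonneg_left (csInf_le hbB h2) hlb)
    · exact add_le_add (mul_le_mul_of_nonneg_left (le_csSup haA h1) hla)
        (mul_le_mul_of_nonneg_left (le_csSup hbA h2) hlb)
  have hx_le : volume sx ≤ ENNReal.ofReal (la * (Ba - Aa) + lb * (Bb - Ab)) := by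
    calc volume sx ≤ volume (Icc (la * Aa + lb * Ab) (la * Ba + lb * Bb)) :=
          measure_mono hsub
      _ = ENNReal.ofReal (la * Ba + lb * Bb - (la * Aa + lb * Ab)) := Real.volume_Icc
      _ = ENNReal.ofReal (la * (Ba - Aa) + lb * (Bb - Ab)) := by ring_nf
  have hva : ENNReal.ofReal (Ba - Aa) ≤ volume sa := by
    rw [← Real.volume_Ioo]
    refine measure_mono ?_
    intro y hy
    obtain ⟨a, ha, hay⟩ := exists_lt_of_csInf_lt ⟨y₁0, h10⟩ hy.1
    obtain ⟨b, hb, hyb⟩ := exists_lt_of_lt_csSup ⟨y₁0, h10⟩ hy.2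
    exact hca.ordConnected.out ha hb ⟨hay.le, hyb.le⟩
  have hvb : ENNReal.ofReal (Bb - Ab) ≤ volume sb := by
    rw [← Real.volume_Ioo]
    refine measure_mono ?_
    intro y hy
    obtain ⟨a, ha, hay⟩ := exists_lt_of_csInf_lt ⟨y₂0, h20⟩ hy.1
    obtain ⟨b, hb, hyb⟩ := exists_lt_of_lt_csSup ⟨y₂0, h20⟩ hy.2
    exact hcb.ordConnected.out ha hb ⟨hay.le, hyb.le⟩
  calc volume sx ≤ ENNReal.ofReal (la * (Ba - Aa) + lb * (Bb - Ab)) := hx_le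
    _ = ENNReal.ofReal (la * (Ba - Aa)) + ENNReal.ofReal (lb * (Bb - Ab)) :=
        ENNReal.ofReal_add (mul_nonneg hla (sub_nonneg.2 hAaBa))
          (mul_nonneg hlb (sub_nonneg.2 hAbBb))
    _ = ENNReal.ofReal la * ENNReal.ofReal (Ba - Aa)
        + ENNReal.ofReal lb * ENNReal.ofReal (Bb - Ab) := by
        rw [ENNReal.ofReal_mul hla, ENNReal.ofReal_mul hlb]
    _ ≤ _ := add_le_add (mul_le_mul_right hva _) (mul_le_mul_right hvb _)

lemma prod_vol_le {sx sa sb : Set (ℝ × ℝ)} {la lb : ℝ}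
    (hla : 0 ≤ la) (hlb : 0 ≤ lb)
    (hmx : MeasurableSet sx) (hma : MeasurableSet sa) (hmb : MeasurableSet sb)
    (hca : Convex ℝ sa) (hcb : Convex ℝ sb)
    (hba : Bornology.IsBounded sa) (hbb : Bornology.IsBounded sb)
    (H : ∀ z ∈ sx, ∃ z₁ ∈ sa, ∃ z₂ ∈ sb, z₁.1 = z.1 ∧ z₂.1 = z.1 ∧
      z.2 = la * z₁.2 + lb * z₂.2) :
    volume sx ≤ ENNReal.ofReal la * volume sa + ENNReal.ofReal lb * volume sb := by
  obtain ⟨Ra, hRa⟩ := hba.subset_closedBall 0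
  obtain ⟨Rb, hRb⟩ := hbb.subset_closedBall 0
  have slice_bdd : ∀ (s : Set (ℝ × ℝ)) (R : ℝ), s ⊆ Metric.closedBall 0 R →
      ∀ w : ℝ, (Prod.mk w ⁻¹' s) ⊆ Icc (-R) R := by
    intro s R hR w y hy
    have h1 := hR hy
    rw [Metric.mem_closedBall, dist_zero_right] at h1
    have h2 : |y| ≤ ‖(w, y)‖ := by
      simpa using norm_snd_le (w, y)
    rw [mem_Icc, ← abs_le]
    exact h2.trans h1
  have slice_conv : ∀ (s : Set (ℝ × ℝ)), Convex ℝ s → ∀ w : ℝ,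
      Convex ℝ (Prod.mk w ⁻¹' s) := by
    intro s hs w y₁ h₁ y₂ h₂ a b ha hb hab
    have := hs h₁ h₂ ha hb hab
    simpa [Prod.smul_mk, Prod.mk_add_mk, ← add_mul, hab] using this
  rw [Measure.volume_eq_prod, Measure.prod_apply hmx, Measure.prod_apply hma,
    Measure.prod_apply hmb]
  have key : ∀ w : ℝ, volume (Prod.mk w ⁻¹' sx) ≤
      ENNReal.ofReal la * volume (Prod.mk w ⁻¹' sa)
      + ENNReal.ofReal lb * volume (Prod.mk w ⁻¹' sb) := by
    intro w
    refine oneDim_vol_le hla hlb (slice_conv _ hca w) (slice_conv _ hcb w)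
      ?_ ?_ ?_ ?_ ?_
    · exact (bddAbove_Icc).mono (slice_bdd _ _ hRa w)
    · exact (bddBelow_Icc).mono (slice_bdd _ _ hRa w)
    · exact (bddAbove_Icc).mono (slice_bdd _ _ hRb w)
    · exact (bddBelow_Icc).mono (slice_bdd _ _ hRb w)
    · intro y hy
      obtain ⟨z₁, h1, z₂, h2, e1, e2, e3⟩ := H (w, y) hy
      refine ⟨z₁.2, ?_, z₂.2, ?_, e3⟩
      · show (w, z₁.2) ∈ sa
        have : z₁ = (w, z₁.2) := Prod.ext e1 rfl
        rwa [this] at h1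
      · show (w, z₂.2) ∈ sb
        have : z₂ = (w, z₂.2) := Prod.ext e2 rfl
        rwa [this] at h2
  calc ∫⁻ w, volume (Prod.mk w ⁻¹' sx)
      ≤ ∫⁻ w, (ENNReal.ofReal la * volume (Prod.mk w ⁻¹' sa)
        + ENNReal.ofReal lb * volume (Prod.mk w ⁻¹' sb)) := lintegral_mono key
    _ = ENNReal.ofReal la * (∫⁻ w, volume (Prod.mk w ⁻¹' sa))
        + ENNReal.ofReal lb * (∫⁻ w, volume (Prod.mk w ⁻¹' sb)) := by
        rw [lintegral_add_left (((measurable_measure_prodMk_left hma)).const_mul _),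
          lintegral_const_mul _ (measurable_measure_prodMk_left hma),
          lintegral_const_mul _ (measurable_measure_prodMk_left hmb)]

local notation "E2" => EuclideanSpace ℝ (Fin 2)

lemma key_ineq (F : Set E2) (hF : F.Finite) (a b : E2) {la lb : ℝ}
    (hla : 0 ≤ la) (hlb : 0 ≤ lb) (hab : la + lb = 1) :
    volume (convexHull ℝ (insert (la • a + lb • b) F)) ≤
      ENNReal.ofReal la * volume (convexHull ℝ (insert a F)) +
      ENNReal.ofReal lb * volume (convexHull ℝ (insert b F)) := by
  have hofr : ENNReal.ofReal la + ENNReal.ofReal lb = 1 := by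
    rw [← ENNReal.ofReal_add hla hlb, hab, ENNReal.ofReal_one]
  rcases eq_or_ne a b with rfl | hne
  · rw [Convex.combo_self hab a]
    rw [← add_mul, hofr, one_mul]
  rcases F.eq_empty_or_nonempty with rfl | hFne
  · simp only [insert_empty_eq, convexHull_singleton]
    simp [measure_singleton]
  -- main case
  set x := la • a + lb • b with hxdef
  set u := b - a with hu
  have hu0 : u ≠ 0 := sub_ne_zero.2 (Ne.symm hne)
  set v : E2 := ‖u‖⁻¹ • u with hv
  have hnv : ‖v‖ = 1 := by
    rw [hv, norm_smul, norm_inv, norm_norm, inv_mul_cancel₀ (norm_ne_zero_iff.2 hu0)]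
  have horth : Orthonormal ℝ (({1} : Set (Fin 2)).restrict (fun _ : Fin 2 => v)) := by
    constructor
    · intro i; exact hnv
    · intro i j hij
      exact absurd (Subtype.ext (by
        have hi := i.2; have hj := j.2
        simp only [mem_singleton_iff] at hi hj
        rw [hi, hj])) hij
  obtain ⟨b0, hb0⟩ := Orthonormal.exists_orthonormalBasis_extension_of_card_eq
    (𝕜 := ℝ) (by simp) horth
  have hb01 : b0 1 = v := hb0 1 rfl
  set T : E2 → ℝ × ℝ := fun z => (b0.repr z 0, b0.repr z 1) with hT
  have hTlin : IsLinearMap ℝ T := by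
    constructor
    · intro y z; simp [hT, Prod.ext_iff]
    · intro c y; simp [hT, Prod.ext_iff]
  -- measure preservation
  set me : E2 ≃ᵐ ℝ × ℝ := (b0.repr.toHomeomorph.toMeasurableEquiv).trans
    ((MeasurableEquiv.toLp 2 (Fin 2 → ℝ)).symm.trans (MeasurableEquiv.finTwoArrow)) with hme
  have hmp : MeasurePreserving me := by
    exact ((volume_preserving_finTwoArrow ℝ).comp
      (EuclideanSpace.volume_preserving_symm_measurableEquiv_toLp (Fin 2))).comp
      b0.measurePreserving_repr
  have hvolT : ∀ S : Set E2, MeasurableSet S → volume (T '' S) = volume S := by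
    intro S hS
    have h1 : T '' S = me.symm ⁻¹' S := by
      rw [← MeasurableEquiv.image_eq_preimage_symm]
      rfl
    rw [h1, (MeasurePreserving.symm me hmp).measure_preimage hS.nullMeasurableSet]
  -- coordinates
  have hrepru : b0.repr u 0 = 0 := by
    have hu' : u = ‖u‖ • v := by
      rw [hv, smul_smul, mul_inv_cancel₀ (norm_ne_zero_iff.2 hu0), one_smul]
    rw [hu', _root_.map_smul, ← hb01]
    simp [EuclideanSpace.single_apply]
  have hfst : (T a).1 = (T b).1 := by
    have : b0.repr b 0 - b0.repr a 0 = 0 := by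
      have h2 : b0.repr u 0 = b0.repr b 0 - b0.repr a 0 := by
        rw [hu, map_sub]; rfl
      rw [← h2]; exact hrepru
    simp only [hT]
    linarith [this]
  have hTx : T x = la • T a + lb • T b := by
    rw [hxdef, hTlin.map_add, hTlin.map_smul, hTlin.map_smul]
  set G : Set (ℝ × ℝ) := T '' F with hG
  have hGne : G.Nonempty := hFne.image T
  have hGfin : G.Finite := hF.image T
  have himg : ∀ w : E2, T '' (convexHull ℝ (insert w F)) = convexHull ℝ (insert (T w) G) := by
    intro w
    rw [hTlin.image_convexHull, image_insert_eq]
  have hcomp : ∀ w : ℝ × ℝ, IsCompact (convexHull ℝ (insert w G)) :=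
    fun w => (hGfin.insert w).isCompact_convexHull (𝕜 := ℝ)
  have hx1 : (T x).1 = (T a).1 := by
    rw [hTx]
    show la * (T a).1 + lb * (T b).1 = (T a).1
    rw [← hfst, ← add_mul, hab, one_mul]
  -- apply prod_vol_le
  have main : volume (convexHull ℝ (insert (T x) G)) ≤
      ENNReal.ofReal la * volume (convexHull ℝ (insert (T a) G)) +
      ENNReal.ofReal lb * volume (convexHull ℝ (insert (T b) G)) := by
    refine prod_vol_le hla hlb ((hcomp _).isClosed.measurableSet)
      ((hcomp _).isClosed.measurableSet) ((hcomp _).isClosed.measurableSet)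
      (convex_convexHull ℝ _) (convex_convexHull ℝ _)
      (hcomp _).isBounded (hcomp _).isBounded ?_
    intro z hz
    rw [convexHull_insert hGne, mem_convexJoin] at hz
    obtain ⟨x'', hx'', k, hk, hseg⟩ := hz
    rw [mem_singleton_iff] at hx''
    subst hx''
    obtain ⟨μ, ν, hμ, hν, hμν, rfl⟩ := hseg
    have hk' : k ∈ convexHull ℝ G := hk
    refine ⟨μ • T a + ν • k, ?_, μ • T b + ν • k, ?_, ?_, ?_, ?_⟩
    · rw [convexHull_insert hGne]
      rw [mem_convexJoin]
      exact ⟨T a, mem_singleton _, k, hk', μ, ν, hμ, hν, hμν, rfl⟩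
    · rw [convexHull_insert hGne]
      rw [mem_convexJoin]
      exact ⟨T b, mem_singleton _, k, hk', μ, ν, hμ, hν, hμν, rfl⟩
    · show μ * (T a).1 + ν * k.1 = μ * (T x).1 + ν * k.1
      rw [hx1]
    · show μ * (T b).1 + ν * k.1 = μ * (T x).1 + ν * k.1
      rw [hx1, hfst]
    · show μ * (T x).2 + ν * k.2 = la * (μ * (T a).2 + ν * k.2) + lb * (μ * (T b).2 + ν * k.2)
      have hx2 : (T x).2 = la * (T a).2 + lb * (T b).2 := by
        rw [hTx]; rfl
      rw [hx2]; linear_combination (-(ν * k.2)) * hab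
  -- transport back
  have hmeas : ∀ w : E2, MeasurableSet (convexHull ℝ (insert w F)) :=
    fun w => ((hF.insert w).isCompact_convexHull (𝕜 := ℝ)).isClosed.measurableSet
  calc volume (convexHull ℝ (insert x F))
      = volume (convexHull ℝ (insert (T x) G)) := by rw [← himg, hvolT _ (hmeas x)]
    _ ≤ ENNReal.ofReal la * volume (convexHull ℝ (insert (T a) G)) +
        ENNReal.ofReal lb * volume (convexHull ℝ (insert (T b) G)) := main
    _ = _ := by rw [← himg, ← himg, hvolT _ (hmeas a), hvolT _ (hmeas b)]

lemma convexOn_vol (F : Set E2) (hF : F.Finite) :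
    ConvexOn ℝ univ (fun x => (volume (convexHull ℝ (insert x F))).toReal) := by
  refine ⟨convex_univ, ?_⟩
  intro a _ b _ la lb hla hlb hab
  have hkey := key_ineq F hF a b hla hlb hab
  have hfin : ∀ w : E2, volume (convexHull ℝ (insert w F)) ≠ ⊤ :=
    fun w => ((hF.insert w).isCompact_convexHull (𝕜 := ℝ).measure_lt_top).ne
  calc (volume (convexHull ℝ (insert (la • a + lb • b) F))).toReal
      ≤ (ENNReal.ofReal la * volume (convexHull ℝ (insert a F)) +
         ENNReal.ofReal lb * volume (convexHull ℝ (insert b F))).toReal := by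
        refine ENNReal.toReal_mono ?_ hkey
        exact ENNReal.add_ne_top.2 ⟨ENNReal.mul_ne_top ENNReal.ofReal_ne_top (hfin a),
          ENNReal.mul_ne_top ENNReal.ofReal_ne_top (hfin b)⟩
    _ = la • (volume (convexHull ℝ (insert a F))).toReal +
        lb • (volume (convexHull ℝ (insert b F))).toReal := by
        rw [ENNReal.toReal_add (ENNReal.mul_ne_top ENNReal.ofReal_ne_top (hfin a))
          (ENNReal.mul_ne_top ENNReal.ofReal_ne_top (hfin b)),
          ENNReal.toReal_mul, ENNReal.toReal_mul,
          ENNReal.toReal_ofReal hla, ENNReal.toReal_ofReal hlb]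
        rfl

/-- Among all selections of one point from the convex hull of each cluster, there is an
area-maximizing selection using only extreme points of the cluster hulls. -/
theorem max_area_selection_extreme (n : ℕ)
    (C : Fin n → Finset (EuclideanSpace ℝ (Fin 2))) (hC : ∀ i, (C i).Nonempty) :
    ∃ p : Fin n → EuclideanSpace ℝ (Fin 2),
      (∀ i, p i ∈ Set.extremePoints ℝ
        (convexHull ℝ (↑(C i) : Set (EuclideanSpace ℝ (Fin 2))))) ∧
      ∀ q : Fin n → EuclideanSpace ℝ (Fin 2),
        (∀ i, q i ∈ convexHull ℝ (↑(C i) : Set (EuclideanSpace ℝ (Fin 2)))) →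
        volume (convexHull ℝ (Set.range q)) ≤ volume (convexHull ℝ (Set.range p)) := by
  classical
  have hKcomp : ∀ i, IsCompact (convexHull ℝ (↑(C i) : Set E2)) :=
    fun i => (C i).finite_toSet.isCompact_convexHull (𝕜 := ℝ)
  set Ext : Fin n → Set E2 :=
    fun i => Set.extremePoints ℝ (convexHull ℝ (↑(C i) : Set E2)) with hExt
  have hEfin : ∀ i, (Ext i).Finite :=
    fun i => (C i).finite_toSet.subset extremePoints_convexHull_subset
  have hEne : ∀ i, (Ext i).Nonempty := fun i =>
    (hKcomp i).extremePoints_nonempty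
      ((Finset.coe_nonempty.2 (hC i)).convexHull)
  have hEhull : ∀ i, convexHull ℝ (Ext i) = convexHull ℝ (↑(C i) : Set E2) := by
    intro i
    have h := closure_convexHull_extremePoints (hKcomp i) (convex_convexHull ℝ _)
    rwa [IsClosed.closure_eq ((hEfin i).isCompact_convexHull (𝕜 := ℝ).isClosed)] at h
  -- the finite set of extreme-point selections
  have hPfin : {p : Fin n → E2 | ∀ i, p i ∈ Ext i}.Finite := by
    have : {p : Fin n → E2 | ∀ i, p i ∈ Ext i} = Set.pi univ Ext := by
      ext f; simp [Set.mem_pi]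
    rw [this]
    exact Set.Finite.pi hEfin
  have hPne : {p : Fin n → E2 | ∀ i, p i ∈ Ext i}.Nonempty :=
    ⟨fun i => (hEne i).choose, fun i => (hEne i).choose_spec⟩
  obtain ⟨p, hpP, hpmax⟩ := Set.Finite.exists_maximalFor
    (fun p => volume (convexHull ℝ (Set.range p))) _ hPfin hPne
  have hmax : ∀ q ∈ {p : Fin n → E2 | ∀ i, p i ∈ Ext i},
      volume (convexHull ℝ (Set.range q)) ≤ volume (convexHull ℝ (Set.range p)) := by
    intro q hq
    rcases le_total (volume (convexHull ℝ (Set.range q)))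
      (volume (convexHull ℝ (Set.range p))) with h | h
    · exact h
    · exact hpmax hq h
  have main : ∀ s : Finset (Fin n), ∀ q : Fin n → E2,
      (∀ i, q i ∈ convexHull ℝ (↑(C i) : Set E2)) →
      (∀ i, i ∉ s → q i ∈ Ext i) →
      volume (convexHull ℝ (Set.range q)) ≤ volume (convexHull ℝ (Set.range p)) := by
    intro s
    induction s using Finset.induction_on with
    | empty =>
      intro q hq hq'
      exact hmax q (fun i => hq' i (Finset.notMem_empty i))
    | @insert j s' hj IH =>
      intro q hq hq'
      set F : Set E2 := q '' {i | i ≠ j} with hFdef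
      have hFfin : F.Finite := Set.toFinite _
      have hrange : ∀ x : E2, Set.range (Function.update q j x) = insert x F := by
        intro x; ext y
        constructor
        · rintro ⟨i, rfl⟩
          rcases eq_or_ne i j with rfl | hij
          · exact Or.inl (Function.update_self i x q)
          · exact Or.inr ⟨i, hij, (Function.update_of_ne hij x q).symm⟩
        · rintro (rfl | ⟨i, hij, rfl⟩)
          · exact ⟨j, Function.update_self j y q⟩
          · exact ⟨i, Function.update_of_ne hij x q⟩
      have hconv := convexOn_vol F hFfin
      have hmem : q j ∈ convexHull ℝ (Ext j) := by
        rw [hEhull j]; exact hq j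
      obtain ⟨e, he, hge⟩ := hconv.exists_ge_of_mem_convexHull (subset_univ _) hmem
      have h1 : Set.range q = insert (q j) F := by
        have h := hrange (q j)
        rwa [Function.update_eq_self] at h
      have h2 : Set.range (Function.update q j e) = insert e F := hrange e
      have hfin : ∀ S : Set E2, S.Finite → volume (convexHull ℝ S) ≠ ⊤ :=
        fun S hS => (hS.isCompact_convexHull (𝕜 := ℝ).measure_lt_top).ne
      have hle : volume (convexHull ℝ (Set.range q)) ≤
          volume (convexHull ℝ (Set.range (Function.update q j e))) := by
        rw [h1, h2]
        exact (ENNReal.toReal_le_toReal (hfin _ (hFfin.insert _)) (hfin _ (hFfin.insert _))).1 hge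
      refine hle.trans (IH (Function.update q j e) ?_ ?_)
      · intro i
        rcases eq_or_ne i j with rfl | hij
        · rw [Function.update_self]
          exact extremePoints_subset he
        · rw [Function.update_of_ne hij]
          exact hq i
      · intro i hi
        rcases eq_or_ne i j with rfl | hij
        · rw [Function.update_self]
          exact he
        · rw [Function.update_of_ne hij]
          exact hq' i (by simp [Finset.mem_insert, hij, hi])
  exact ⟨p, hpP, fun q hq => main Finset.univ q hq
    (fun i hi => absurd (Finset.mem_univ i) hi)⟩
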